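/- Let 0 < ε ≤ 0.1 and let ψ be a unit vector in ℂ^d within distance ε of some b = (1/√d)∑ₖ sₖeₖ with sₖ ∈ {±1}. Then the likelihood L(ψ) from one set of basic observations (measuring each |eₖ⟩⟨eₖ| once and each |(eⱼ±ieₖ)/√2⟩⟨(eⱼ±ieₖ)/√2| once for j<k) satisfies L(ψ) ≥ (1 − 2ε d^{5/2})/d^{d²}. -/

import Mathlib

open Finset

/-- The likelihood of one set of basic observations: measuring each `|e_k⟩⟨e_k|` once and
each `|(e_j ± i e_k)/√2⟩⟨(e_j ± i e_k)/√2|` once for `j < k`. -/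
noncomputable def basicLikelihood {d : ℕ} (ψ : EuclideanSpace ℂ (Fin d)) : ℝ :=
  (∏ k, ‖(inner ℂ (EuclideanSpace.single k (1 : ℂ)) ψ : ℂ)‖ ^ 2) *
  ∏ j, ∏ k ∈ Finset.univ.filter (fun k => j < k),
    (‖(inner ℂ ((Real.sqrt 2 : ℂ)⁻¹ • (EuclideanSpace.single j (1 : ℂ)
        + Complex.I • EuclideanSpace.single k (1 : ℂ))) ψ : ℂ)‖ ^ 2 *
     ‖(inner ℂ ((Real.sqrt 2 : ℂ)⁻¹ • (EuclideanSpace.single j (1 : ℂ)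
        - Complex.I • EuclideanSpace.single k (1 : ℂ))) ψ : ℂ)‖ ^ 2)

lemma key {d : ℕ} (hd : 0 < d) {ε : ℝ} (hε0 : 0 < ε)
    {b ψ v : EuclideanSpace ℂ (Fin d)}
    (hv : ‖v‖ = 1) (hvb : (Real.sqrt d)⁻¹ ≤ ‖(inner ℂ v b : ℂ)‖)
    (hψb : ‖ψ - b‖ ≤ ε) :
    (1 - 2 * ε * Real.sqrt d) / d ≤ ‖(inner ℂ v ψ : ℂ)‖ ^ 2 := by
  have hds : (0:ℝ) < Real.sqrt d := Real.sqrt_pos.2 (by exact_mod_cast hd)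
  have hsq : Real.sqrt d * Real.sqrt d = d := Real.mul_self_sqrt (by positivity)
  have hCS : ‖(inner ℂ v (ψ - b) : ℂ)‖ ≤ ε := by
    calc ‖(inner ℂ v (ψ - b) : ℂ)‖ ≤ ‖v‖ * ‖ψ - b‖ := norm_inner_le_norm v (ψ - b)
    _ ≤ ε := by rw [hv, one_mul]; exact hψb
  have h1 : ‖(inner ℂ v b : ℂ)‖ - ε ≤ ‖(inner ℂ v ψ : ℂ)‖ := by
    have he : (inner ℂ v b : ℂ) = inner ℂ v ψ - inner ℂ v (ψ - b) := by
      rw [inner_sub_right]; ring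
    have := norm_sub_le (inner ℂ v ψ : ℂ) (inner ℂ v (ψ - b) : ℂ)
    rw [← he] at this
    linarith
  have hinv : Real.sqrt d * (Real.sqrt d)⁻¹ = 1 := mul_inv_cancel₀ hds.ne'
  rcases le_or_gt ε (Real.sqrt d)⁻¹ with h | h
  · have h2 : (Real.sqrt d)⁻¹ - ε ≤ ‖(inner ℂ v ψ : ℂ)‖ := by linarith
    have h3 : (0:ℝ) ≤ (Real.sqrt d)⁻¹ - ε := by linarith
    have h4 : ((Real.sqrt d)⁻¹ - ε)^2 ≤ ‖(inner ℂ v ψ : ℂ)‖^2 :=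
      pow_le_pow_left₀ h3 h2 2
    rw [div_le_iff₀ (by exact_mod_cast hd : (0:ℝ) < (d:ℝ))]
    have hdd : (d:ℝ) = Real.sqrt d * Real.sqrt d := hsq.symm
    nlinarith [sq_nonneg ((Real.sqrt d)⁻¹ - ε), sq_nonneg ε, mul_pos hε0 hds]
  · have hneg : 1 - 2 * ε * Real.sqrt d < 0 := by nlinarith
    have : (1 - 2 * ε * Real.sqrt d) / d ≤ 0 :=
      div_nonpos_of_nonpos_of_nonneg (le_of_lt hneg) (by positivity)
    exact this.trans (sq_nonneg _)

lemma cnorm_sub (a c : ℝ) (ha : a^2 = 1) (hc : c^2 = 1) :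
    ‖(a:ℂ) - Complex.I * c‖ = Real.sqrt 2 := by
  rw [Complex.norm_def, Complex.normSq_apply]
  simp
  rw [show a*a + c*c = 2 by nlinarith]

lemma cnorm_add (a c : ℝ) (ha : a^2 = 1) (hc : c^2 = 1) :
    ‖(a:ℂ) + Complex.I * c‖ = Real.sqrt 2 := by
  rw [Complex.norm_def, Complex.normSq_apply]
  simp
  rw [show a*a + c*c = 2 by nlinarith]

lemma vnorm_add {d : ℕ} (j k : Fin d) (hjk : j ≠ k) :
    ‖(EuclideanSpace.single j (1:ℂ) + Complex.I • EuclideanSpace.single k (1:ℂ))‖ = Real.sqrt 2 := by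
  have h := @norm_add_sq ℂ _ _ _ _ (EuclideanSpace.single j (1:ℂ)) (Complex.I • EuclideanSpace.single k (1:ℂ))
  rw [inner_smul_right, EuclideanSpace.inner_single_left, EuclideanSpace.single_apply,
    if_neg hjk] at h
  simp [norm_smul, EuclideanSpace.norm_single] at h
  rw [show (Real.sqrt 2) = Real.sqrt (‖(EuclideanSpace.single j (1:ℂ) + Complex.I • EuclideanSpace.single k (1:ℂ))‖^2) by rw [h]; norm_num, Real.sqrt_sq (norm_nonneg _)]

lemma vnorm_sub {d : ℕ} (j k : Fin d) (hjk : j ≠ k) :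
    ‖(EuclideanSpace.single j (1:ℂ) - Complex.I • EuclideanSpace.single k (1:ℂ))‖ = Real.sqrt 2 := by
  have h := @norm_sub_sq ℂ _ _ _ _ (EuclideanSpace.single j (1:ℂ)) (Complex.I • EuclideanSpace.single k (1:ℂ))
  rw [inner_smul_right, EuclideanSpace.inner_single_left, EuclideanSpace.single_apply,
    if_neg hjk] at h
  simp [norm_smul, EuclideanSpace.norm_single] at h
  rw [show (Real.sqrt 2) = Real.sqrt (‖(EuclideanSpace.single j (1:ℂ) - Complex.I • EuclideanSpace.single k (1:ℂ))‖^2) by rw [h]; norm_num, Real.sqrt_sq (norm_nonneg _)]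

lemma inner_add_eq {d : ℕ} (j k : Fin d) (ψ : EuclideanSpace ℂ (Fin d)) :
    (inner ℂ ((Real.sqrt 2 : ℂ)⁻¹ • (EuclideanSpace.single j (1 : ℂ)
        + Complex.I • EuclideanSpace.single k (1 : ℂ))) ψ : ℂ)
      = (Real.sqrt 2 : ℂ)⁻¹ * (ψ j - Complex.I * ψ k) := by
  simp [inner_smul_left, inner_add_left, EuclideanSpace.inner_single_left, Complex.conj_I]
  ring

lemma inner_sub_eq {d : ℕ} (j k : Fin d) (ψ : EuclideanSpace ℂ (Fin d)) :
    (inner ℂ ((Real.sqrt 2 : ℂ)⁻¹ • (EuclideanSpace.single j (1 : ℂ)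
        - Complex.I • EuclideanSpace.single k (1 : ℂ))) ψ : ℂ)
      = (Real.sqrt 2 : ℂ)⁻¹ * (ψ j + Complex.I * ψ k) := by
  simp [inner_smul_left, inner_sub_left, EuclideanSpace.inner_single_left, Complex.conj_I]
  ring

theorem stmt_17 (d : ℕ) (hd : 2 ≤ d) (ε : ℝ) (hε0 : 0 < ε) (hε1 : ε ≤ 0.1)
    (s : Fin d → ℝ) (hs : ∀ k, s k = 1 ∨ s k = -1)
    (b : EuclideanSpace ℂ (Fin d))
    (hb : ∀ k, b k = (s k : ℂ) / (Real.sqrt d : ℂ))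
    (ψ : EuclideanSpace ℂ (Fin d)) (hψ : ‖ψ‖ = 1)
    (hclose : ‖ψ - b‖ ≤ ε) :
    (1 - 2 * ε * (d : ℝ) ^ ((5 : ℝ) / 2)) / (d : ℝ) ^ (d ^ 2) ≤ basicLikelihood ψ := by
  have hd0 : 0 < d := by omega
  have hdR : (0:ℝ) < d := by exact_mod_cast hd0
  have hds : (0:ℝ) < Real.sqrt d := Real.sqrt_pos.2 hdR
  have hs2 : ∀ k, (s k)^2 = 1 := by intro k; rcases hs k with h | h <;> rw [h] <;> norm_num
  have hsn : ∀ k, ‖(s k : ℂ)‖ = 1 := by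
    intro k; rcases hs k with h | h <;> rw [h] <;> norm_num
  have h2s : (0:ℝ) < Real.sqrt 2 := Real.sqrt_pos.2 (by norm_num)
  have hs2n : ‖((Real.sqrt 2 : ℝ) : ℂ)⁻¹‖ = (Real.sqrt 2)⁻¹ := by
    rw [norm_inv, Complex.norm_real, Real.norm_eq_abs, abs_of_pos h2s]
  have hsdn : ‖((Real.sqrt d : ℝ) : ℂ)‖ = Real.sqrt d := by
    rw [Complex.norm_real, Real.norm_eq_abs, abs_of_pos hds]
  -- norms of inner products with b
  have hb1 : ∀ k : Fin d, ‖(inner ℂ (EuclideanSpace.single k (1:ℂ)) b : ℂ)‖ = (Real.sqrt d)⁻¹ := by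
    intro k
    rw [EuclideanSpace.inner_single_left, map_one, one_mul, hb k, norm_div, hsn k, hsdn, one_div]
  have hbadd : ∀ j k : Fin d,
      ‖(inner ℂ ((Real.sqrt 2 : ℂ)⁻¹ • (EuclideanSpace.single j (1 : ℂ)
        + Complex.I • EuclideanSpace.single k (1 : ℂ))) b : ℂ)‖ = (Real.sqrt d)⁻¹ := by
    intro j k
    rw [inner_add_eq, norm_mul, hs2n, hb j, hb k]
    rw [show (s j : ℂ) / (Real.sqrt d : ℂ) - Complex.I * ((s k : ℂ) / (Real.sqrt d : ℂ))
        = ((s j : ℂ) - Complex.I * (s k : ℂ)) / (Real.sqrt d : ℂ) by ring]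
    rw [norm_div, cnorm_sub _ _ (hs2 j) (hs2 k), hsdn]
    field_simp
  have hbsub : ∀ j k : Fin d,
      ‖(inner ℂ ((Real.sqrt 2 : ℂ)⁻¹ • (EuclideanSpace.single j (1 : ℂ)
        - Complex.I • EuclideanSpace.single k (1 : ℂ))) b : ℂ)‖ = (Real.sqrt d)⁻¹ := by
    intro j k
    rw [inner_sub_eq, norm_mul, hs2n, hb j, hb k]
    rw [show (s j : ℂ) / (Real.sqrt d : ℂ) + Complex.I * ((s k : ℂ) / (Real.sqrt d : ℂ))
        = ((s j : ℂ) + Complex.I * (s k : ℂ)) / (Real.sqrt d : ℂ) by ring]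
    rw [norm_div, cnorm_add _ _ (hs2 j) (hs2 k), hsdn]
    field_simp
  -- norms of the measurement vectors
  have hv1 : ∀ k : Fin d, ‖EuclideanSpace.single k (1:ℂ)‖ = 1 := by
    intro k; rw [EuclideanSpace.norm_single]; norm_num
  have hvadd : ∀ j k : Fin d, j ≠ k →
      ‖(Real.sqrt 2 : ℂ)⁻¹ • (EuclideanSpace.single j (1 : ℂ)
        + Complex.I • EuclideanSpace.single k (1 : ℂ))‖ = 1 := by
    intro j k hjk
    rw [norm_smul, hs2n, vnorm_add j k hjk, inv_mul_cancel₀ h2s.ne']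
  have hvsub : ∀ j k : Fin d, j ≠ k →
      ‖(Real.sqrt 2 : ℂ)⁻¹ • (EuclideanSpace.single j (1 : ℂ)
        - Complex.I • EuclideanSpace.single k (1 : ℂ))‖ = 1 := by
    intro j k hjk
    rw [norm_smul, hs2n, vnorm_sub j k hjk, inv_mul_cancel₀ h2s.ne']
  -- per-factor lower bounds
  set C : ℝ := (1 - 2 * ε * Real.sqrt d) / d with hC
  have hkey1 : ∀ k : Fin d, C ≤ ‖(inner ℂ (EuclideanSpace.single k (1:ℂ)) ψ : ℂ)‖^2 :=
    fun k => key hd0 hε0 (hv1 k) (le_of_eq (hb1 k).symm) hclose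
  have hkey2 : ∀ j k : Fin d, j ≠ k →
      C ≤ ‖(inner ℂ ((Real.sqrt 2 : ℂ)⁻¹ • (EuclideanSpace.single j (1 : ℂ)
        + Complex.I • EuclideanSpace.single k (1 : ℂ))) ψ : ℂ)‖^2 :=
    fun j k hjk => key hd0 hε0 (hvadd j k hjk) (le_of_eq (hbadd j k).symm) hclose
  have hkey3 : ∀ j k : Fin d, j ≠ k →
      C ≤ ‖(inner ℂ ((Real.sqrt 2 : ℂ)⁻¹ • (EuclideanSpace.single j (1 : ℂ)
        - Complex.I • EuclideanSpace.single k (1 : ℂ))) ψ : ℂ)‖^2 :=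
    fun j k hjk => key hd0 hε0 (hvsub j k hjk) (le_of_eq (hbsub j k).symm) hclose
  have hLnonneg : 0 ≤ basicLikelihood ψ := by
    unfold basicLikelihood
    apply mul_nonneg
    · exact Finset.prod_nonneg fun _ _ => by positivity
    · exact Finset.prod_nonneg fun _ _ => Finset.prod_nonneg fun _ _ => by positivity
  have hd1 : (1:ℝ) ≤ d := by exact_mod_cast hd0
  have hsqd_le : Real.sqrt d ≤ (d:ℝ) ^ ((5:ℝ)/2) := by
    rw [Real.sqrt_eq_rpow]
    exact Real.rpow_le_rpow_of_exponent_le hd1 (by norm_num)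
  rcases le_or_gt C 0 with hC0 | hC0
  · -- numerator is nonpositive
    have h1 : 1 - 2 * ε * Real.sqrt d ≤ 0 := by
      by_contra h
      push_neg at h
      exact absurd (div_pos h hdR) (not_lt.2 hC0)
    have h2 : 1 - 2 * ε * (d:ℝ) ^ ((5:ℝ)/2) ≤ 0 := by nlinarith
    calc (1 - 2 * ε * (d : ℝ) ^ ((5 : ℝ) / 2)) / (d : ℝ) ^ (d ^ 2) ≤ 0 :=
          div_nonpos_of_nonpos_of_nonneg h2 (by positivity)
      _ ≤ basicLikelihood ψ := hLnonneg
  · -- main case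
    have hCpow : C ^ (d ^ 2) ≤ basicLikelihood ψ := by
      have hP1 : C ^ d ≤ ∏ k, ‖(inner ℂ (EuclideanSpace.single k (1:ℂ)) ψ : ℂ)‖^2 := by
        calc C ^ d = ∏ _k : Fin d, C := by
              rw [Finset.prod_const, Finset.card_univ, Fintype.card_fin]
          _ ≤ _ := Finset.prod_le_prod (fun _ _ => hC0.le) (fun k _ => hkey1 k)
      have hP2 : ∏ j : Fin d, ∏ k ∈ Finset.univ.filter (fun k => j < k), (C * C) ≤
          ∏ j : Fin d, ∏ k ∈ Finset.univ.filter (fun k => j < k),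
            (‖(inner ℂ ((Real.sqrt 2 : ℂ)⁻¹ • (EuclideanSpace.single j (1 : ℂ)
              + Complex.I • EuclideanSpace.single k (1 : ℂ))) ψ : ℂ)‖ ^ 2 *
            ‖(inner ℂ ((Real.sqrt 2 : ℂ)⁻¹ • (EuclideanSpace.single j (1 : ℂ)
              - Complex.I • EuclideanSpace.single k (1 : ℂ))) ψ : ℂ)‖ ^ 2) := by
        apply Finset.prod_le_prod
        · intro j _; exact Finset.prod_nonneg fun _ _ => by positivity
        · intro j _
          apply Finset.prod_le_prod (fun _ _ => by positivity)
          intro k hk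
          rw [Finset.mem_filter] at hk
          have hjk : j ≠ k := ne_of_lt hk.2
          exact mul_le_mul (hkey2 j k hjk) (hkey3 j k hjk) hC0.le (by positivity)
      have hcount : ∏ j : Fin d, ∏ k ∈ Finset.univ.filter (fun k => j < k), (C * C)
          = C ^ (d ^ 2 - d) := by
        have hfe : ∀ j : Fin d, Finset.univ.filter (fun k => j < k) = Finset.Ioi j := by
          intro j; ext k; simp
        have : ∀ j : Fin d, ∏ k ∈ Finset.univ.filter (fun k => j < k), (C * C)
            = C ^ (2 * (d - 1 - (j:ℕ))) := by
          intro j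
          rw [hfe j, Finset.prod_const, Fin.card_Ioi, ← sq, ← pow_mul]
        rw [Finset.prod_congr rfl (fun j _ => this j), Finset.prod_pow_eq_pow_sum]
        congr 1
        rw [← Finset.mul_sum, Fin.sum_univ_eq_sum_range]
        have hr : ∑ i ∈ Finset.range d, (d - 1 - i) = ∑ i ∈ Finset.range d, i := by
          conv_rhs => rw [← Finset.sum_range_reflect]
        rw [hr]
        have h2 := Finset.sum_range_id_mul_two d
        have hdd : d ^ 2 = d * d := sq d
        have hmul : d * (d - 1) = d * d - d := by
          cases d with
          | zero => simp
          | succ n => simp [Nat.succ_sub_one, Nat.succ_mul, Nat.mul_succ]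
        omega
      rw [show d ^ 2 = d + (d ^ 2 - d) by
          have h := Nat.le_self_pow (n := 2) (by norm_num) d; omega,
        pow_add]
      unfold basicLikelihood
      calc C ^ d * C ^ (d ^ 2 - d) ≤
            (∏ k, ‖(inner ℂ (EuclideanSpace.single k (1:ℂ)) ψ : ℂ)‖^2) * C ^ (d ^ 2 - d) := by
            apply mul_le_mul_of_nonneg_right hP1 (by positivity)
        _ ≤ _ := by
            apply mul_le_mul_of_nonneg_left _ (Finset.prod_nonneg fun _ _ => by positivity)
            rw [← hcount]
            exact hP2
    refine le_trans ?_ hCpow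
    -- Bernoulli
    have hnum : 0 < 1 - 2 * ε * Real.sqrt d := by
      by_contra h
      push_neg at h
      exact absurd (div_nonpos_of_nonpos_of_nonneg h hdR.le) (not_le.2 hC0)
    have hbern : 1 + (d^2 : ℕ) * (-(2 * ε * Real.sqrt d)) ≤ (1 + (-(2 * ε * Real.sqrt d))) ^ (d^2) := by
      apply one_add_mul_le_pow
      nlinarith
    have hrw : (d:ℝ) ^ ((5:ℝ)/2) = (d:ℝ)^(2:ℕ) * Real.sqrt d := by
      rw [Real.sqrt_eq_rpow, ← Real.rpow_natCast (d:ℝ) 2, ← Real.rpow_add hdR]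
      norm_num
    rw [hC, div_pow, div_le_div_iff₀ (by positivity) (by positivity)]
    have hdpow : ((d:ℝ))^(d^2) = ((d:ℝ)^(d^2) : ℝ) := rfl
    rw [hrw]
    have h1 : 1 - 2 * ε * ((d:ℝ)^(2:ℕ) * Real.sqrt d) ≤ (1 - 2 * ε * Real.sqrt d) ^ (d^2) := by
      have : 1 + (d^2 : ℕ) * (-(2 * ε * Real.sqrt d)) = 1 - 2 * ε * ((d:ℝ)^(2:ℕ) * Real.sqrt d) := by
        push_cast
        ring
      rw [← this]
      have hb2 : (1 : ℝ) - 2 * ε * Real.sqrt d = 1 + -(2 * ε * Real.sqrt d) := by ring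
      rw [hb2]
      exact hbern
    calc (1 - 2 * ε * ((d:ℝ)^(2:ℕ) * Real.sqrt d)) * (d:ℝ)^(d^2)
        ≤ (1 - 2 * ε * Real.sqrt d) ^ (d^2) * (d:ℝ)^(d^2) := by
          apply mul_le_mul_of_nonneg_right h1 (by positivity)
      _ = _ := by ring
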